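/- arXiv:2312.04823 — 6 statements merged into one kernel-verified Lean document; each statement's English description precedes it below -/
import Mathlib

section
/- Let n ≥ 1, 1 ≤ k ≤ n, and let λ : Fin n → ℝ satisfy |λ i| = 1 for exactly k indices i and |λ i| < 1 for all remaining indices (this is the eigenvalue profile of the diffusion operator on data with k well-separated connected clusters). Then lim_{t → ∞} S(λ, t) = log k. -/
open Real Filter

/-- Diffusion spectral entropy of an eigenvalue list `lam` at diffusion time `t`:
`S(λ, t) = -∑ i, α_{i,t} log α_{i,t}` where `α_{i,t} = |λ_i|^t / ∑_j |λ_j|^t`. -/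
noncomputable def diffusionSpectralEntropy {ι : Type*} [Fintype ι] (lam : ι → ℝ) (t : ℝ) : ℝ :=
  -∑ i, (|lam i| ^ t / ∑ j, |lam j| ^ t) * Real.log (|lam i| ^ t / ∑ j, |lam j| ^ t)

/-- For the eigenvalue profile of a diffusion operator on data with `k` well-separated connected
clusters (exactly `k` eigenvalues of modulus 1, all remaining eigenvalues of modulus strictly
less than 1), the diffusion spectral entropy tends to `log k` as `t → ∞`. -/
theorem dse_tendsto_log_k_of_k_clusters {n k : ℕ} (hn : 1 ≤ n) (hk : 1 ≤ k) (hkn : k ≤ n)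
    (lam : Fin n → ℝ)
    (hcard : (Finset.univ.filter fun i => |lam i| = 1).card = k)
    (hlt : ∀ i, |lam i| ≠ 1 → |lam i| < 1) :
    Tendsto (fun t => diffusionSpectralEntropy lam t) atTop (nhds (Real.log k)) := by
  have hk0 : (0:ℝ) < k := by exact_mod_cast hk
  -- limit of each power
  have hpow : ∀ i : Fin n, Tendsto (fun t : ℝ => |lam i| ^ t) atTop
      (nhds (if |lam i| = 1 then (1:ℝ) else 0)) := by
    intro i
    by_cases h : |lam i| = 1
    · simp only [h, if_pos, Real.one_rpow]
      exact tendsto_const_nhds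
    · simp only [h, if_neg, if_false]
      exact tendsto_rpow_atTop_of_base_lt_one _ (by linarith [abs_nonneg (lam i)]) (hlt i h)
  -- limit of the denominator
  have hD : Tendsto (fun t : ℝ => ∑ j, |lam j| ^ t) atTop (nhds (k : ℝ)) := by
    have h := tendsto_finset_sum Finset.univ (fun i _ => hpow i)
    have hval : (∑ i, if |lam i| = 1 then (1:ℝ) else 0) = (k : ℝ) := by
      rw [Finset.sum_boole, hcard]
    rwa [hval] at h
  -- limit of each ratio
  set L : Fin n → ℝ := fun i => (if |lam i| = 1 then (1:ℝ) else 0) / k with hL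
  have hα : ∀ i : Fin n, Tendsto (fun t : ℝ => |lam i| ^ t / ∑ j, |lam j| ^ t) atTop
      (nhds (L i)) := fun i => (hpow i).div hD (ne_of_gt hk0)
  have hterm : ∀ i : Fin n, Tendsto
      (fun t : ℝ => (|lam i| ^ t / ∑ j, |lam j| ^ t) * Real.log (|lam i| ^ t / ∑ j, |lam j| ^ t))
      atTop (nhds (L i * Real.log (L i))) := fun i =>
    (Real.continuous_mul_log.tendsto _).comp (hα i)
  have hsum := (tendsto_finset_sum Finset.univ (fun i _ => hterm i)).neg
  have hval : -∑ i, L i * Real.log (L i) = Real.log k := by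
    have : ∀ i : Fin n, L i * Real.log (L i)
        = if |lam i| = 1 then (1/k) * Real.log (1/k) else 0 := by
      intro i
      by_cases h : |lam i| = 1 <;> simp [hL, h]
    rw [Finset.sum_congr rfl (fun i _ => this i), ← Finset.sum_filter]
    simp only [Finset.sum_const, hcard, nsmul_eq_mul]
    rw [Real.log_div one_ne_zero (ne_of_gt hk0), Real.log_one]
    field_simp
    ring
  rw [hval] at hsum
  simpa [diffusionSpectralEntropy] using hsum
end

section
/- Let k ≥ 1. Suppose λ : Fin n → ℝ has exactly k indices with |λ i| = 1 and |λ i| < 1 for all remaining indices (the eigenvalue profile of a hidden layer with k well-separated clusters), and for each class label y_j (j = 1,…,k) the conditional eigenvalue profile μ^{(j)} : Fin n_j → ℝ has exactly one index with |μ^{(j)} i| = 1 and modulus < 1 elsewhere (each class lies in a single connected cluster). Let p_1,…,p_k ≥ 0 with Σ_j p_j = 1. Then the diffusion spectral mutual information I(t) = S(λ, t) − Σ_{j=1}^k p_j · S(μ^{(j)}, t) satisfies lim_{t → ∞} I(t) = log k. -/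
open Real Filter

lemma entropy_tendsto_log {ι : Type*} [Fintype ι] (lam : ι → ℝ) (k : ℕ) (hk : 1 ≤ k)
    (hcard : (Finset.univ.filter fun i => |lam i| = 1).card = k)
    (hlt : ∀ i, |lam i| ≠ 1 → |lam i| < 1) :
    Tendsto (fun t => diffusionSpectralEntropy lam t) atTop (nhds (Real.log k)) := by
  have hk0 : (0:ℝ) < k := by exact_mod_cast hk
  set L : ι → ℝ := fun i => if |lam i| = 1 then 1 else 0 with hL
  have hterm : ∀ i, Tendsto (fun t : ℝ => |lam i| ^ t) atTop (nhds (L i)) := by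
    intro i
    by_cases h : |lam i| = 1
    · simpa [hL, h, Real.one_rpow] using tendsto_const_nhds (α := ℝ) (f := atTop) (a := (1:ℝ))
    · simp only [hL, h, if_false]
      exact tendsto_rpow_atTop_of_base_lt_one _ (by linarith [abs_nonneg (lam i)]) (hlt i h)
  have hsumL : ∑ i, L i = k := by
    rw [hL]
    simp only [Finset.sum_boole, hcard]
  have hD : Tendsto (fun t : ℝ => ∑ j, |lam j| ^ t) atTop (nhds (k:ℝ)) := by
    rw [← hsumL]
    exact tendsto_finset_sum (f := fun i (t:ℝ) => |lam i| ^ t) _ (fun i _ => hterm i)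
  have halpha : ∀ i, Tendsto (fun t : ℝ => |lam i| ^ t / ∑ j, |lam j| ^ t) atTop
      (nhds (L i / k)) := fun i => Filter.Tendsto.div (hterm i) hD (ne_of_gt hk0)
  have hmain : Tendsto
      (fun t : ℝ => ∑ i, (|lam i| ^ t / ∑ j, |lam j| ^ t) *
        Real.log (|lam i| ^ t / ∑ j, |lam j| ^ t)) atTop
      (nhds (∑ i, (L i / k) * Real.log (L i / k))) := by
    exact tendsto_finset_sum
      (f := fun i (t:ℝ) => (|lam i| ^ t / ∑ j, |lam j| ^ t) * Real.log (|lam i| ^ t / ∑ j, |lam j| ^ t))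
      _ (fun i _ => (Real.continuous_mul_log.continuousAt).tendsto.comp (halpha i))
  have hval : ∑ i, (L i / k) * Real.log (L i / k) = - Real.log k := by
    have h1 : ∀ i, (L i / k) * Real.log (L i / k)
        = if |lam i| = 1 then (1/(k:ℝ)) * Real.log (1/(k:ℝ)) else 0 := by
      intro i; by_cases h : |lam i| = 1 <;> simp [hL, h]
    simp_rw [h1]
    rw [← Finset.sum_filter, Finset.sum_const, hcard, nsmul_eq_mul]
    rw [one_div, Real.log_inv]
    field_simp
  have := hmain.neg
  rw [hval, neg_neg] at this
  exact this

/-- If a hidden layer has eigenvalue profile `lam` with exactly `k` eigenvalues of modulus 1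
(`k` well-separated clusters, all other moduli `< 1`), and each of the `k` class-conditional
eigenvalue profiles `μ j` has exactly one eigenvalue of modulus 1 (each class lies in a single
connected cluster, all other moduli `< 1`), then the diffusion spectral mutual information
`I(t) = S(λ, t) − ∑ j p_j S(μ^{(j)}, t)` tends to `log k` as `t → ∞`. -/
theorem dsmi_tendsto_log_k {n k : ℕ} (hn : 1 ≤ n) (hk : 1 ≤ k)
    (lam : Fin n → ℝ)
    (hcard : (Finset.univ.filter fun i => |lam i| = 1).card = k)
    (hlt : ∀ i, |lam i| ≠ 1 → |lam i| < 1)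
    (nj : Fin k → ℕ) (μ : (j : Fin k) → Fin (nj j) → ℝ)
    (hμcard : ∀ j, (Finset.univ.filter fun i => |μ j i| = 1).card = 1)
    (hμlt : ∀ j i, |μ j i| ≠ 1 → |μ j i| < 1)
    (p : Fin k → ℝ) (hp : ∀ j, 0 ≤ p j) (hps : ∑ j, p j = 1) :
    Tendsto
      (fun t => diffusionSpectralEntropy lam t - ∑ j, p j * diffusionSpectralEntropy (μ j) t)
      atTop (nhds (Real.log k)) := by
  have h1 := entropy_tendsto_log lam k hk hcard hlt
  have h2 : ∀ j, Tendsto (fun t => diffusionSpectralEntropy (μ j) t) atTop (nhds 0) := by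
    intro j
    simpa using entropy_tendsto_log (μ j) 1 le_rfl (hμcard j) (hμlt j)
  have h3 : Tendsto (fun t => ∑ j, p j * diffusionSpectralEntropy (μ j) t) atTop (nhds 0) := by
    have := tendsto_finset_sum (Finset.univ : Finset (Fin k))
      (fun j _ => ((h2 j).const_mul (p j)))
    simpa using this
  simpa using h1.sub h3
end

section
/- Let n ≥ 3 and 2 ≤ m ≤ n − 1, and let λ_1 ≥ λ_2 ≥ ⋯ ≥ λ_{m+1} ≥ 0 be reals with λ_1 > 0. Then φ_m(λ_1, …, λ_m) ≥ φ_{m+1}(λ_1, …, λ_m, λ_{m+1}). -/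
open Real Finset

/-- The functional `φ_m(λ_1, …, λ_m)` from the DSE upper-bound lemma: with
`S_m = (n − m + 1)·λ_m + ∑_{i=1}^{m−1} λ_i`,
`φ_m = −(n − m + 1)·(λ_m/S_m)·log(λ_m/S_m) − ∑_{i=1}^{m−1} (λ_i/S_m)·log(λ_i/S_m)`. -/
noncomputable def phi (n m : ℕ) (lam : ℕ → ℝ) : ℝ :=
  -((n : ℝ) - m + 1) *
      (lam m / (((n : ℝ) - m + 1) * lam m + ∑ i ∈ Finset.Icc 1 (m - 1), lam i)) *
      Real.log (lam m / (((n : ℝ) - m + 1) * lam m + ∑ i ∈ Finset.Icc 1 (m - 1), lam i)) -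
    ∑ i ∈ Finset.Icc 1 (m - 1),
      (lam i / (((n : ℝ) - m + 1) * lam m + ∑ j ∈ Finset.Icc 1 (m - 1), lam j)) *
        Real.log (lam i / (((n : ℝ) - m + 1) * lam m + ∑ j ∈ Finset.Icc 1 (m - 1), lam j))

private lemma key_term (S : ℝ) (hS : 0 < S) (y : ℝ) (hy : 0 ≤ y) :
    y / S * Real.log (y / S) = (y * Real.log y - y * Real.log S) / S := by
  rcases hy.eq_or_lt with h | h
  · simp [← h]
  · rw [Real.log_div h.ne' hS.ne']
    field_simp

private lemma entropy_eq (c S : ℝ) (s : Finset ℕ) (f : ℕ → ℝ)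
    (hf : ∀ i ∈ s, 0 ≤ f i) (x : ℝ) (hx : 0 ≤ x) (hS : 0 < S)
    (hSeq : S = c * x + ∑ i ∈ s, f i) :
    -c * (x / S) * Real.log (x / S) - ∑ i ∈ s, (f i / S) * Real.log (f i / S) =
      Real.log S - (c * (x * Real.log x) + ∑ i ∈ s, f i * Real.log (f i)) / S := by
  have h1 : -c * (x / S) * Real.log (x / S)
      = -(c * ((x * Real.log x - x * Real.log S) / S)) := by
    rw [mul_assoc, key_term S hS x hx]; ring
  have h2 : ∀ i ∈ s, (f i / S) * Real.log (f i / S)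
      = (f i * Real.log (f i) - f i * Real.log S) / S :=
    fun i hi => key_term S hS (f i) (hf i hi)
  rw [h1, Finset.sum_congr rfl h2, ← Finset.sum_div, Finset.sum_sub_distrib,
    ← Finset.sum_mul]
  have hT : ∑ i ∈ s, f i = S - c * x := by rw [hSeq]; ring
  rw [hT]
  field_simp
  ring

private lemma phi_eq (n q : ℕ) (lam : ℕ → ℝ)
    (hf : ∀ i ∈ Finset.Icc 1 q, 0 ≤ lam i) (hx : 0 ≤ lam (q + 1))
    (hS : 0 < ((n : ℝ) - (q + 1 : ℕ) + 1) * lam (q + 1) + ∑ i ∈ Finset.Icc 1 q, lam i) :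
    phi n (q + 1) lam =
      Real.log (((n : ℝ) - (q + 1 : ℕ) + 1) * lam (q + 1) + ∑ i ∈ Finset.Icc 1 q, lam i) -
        (((n : ℝ) - (q + 1 : ℕ) + 1) * (lam (q + 1) * Real.log (lam (q + 1))) +
            ∑ i ∈ Finset.Icc 1 q, lam i * Real.log (lam i)) /
          (((n : ℝ) - (q + 1 : ℕ) + 1) * lam (q + 1) + ∑ i ∈ Finset.Icc 1 q, lam i) := by
  unfold phi
  simp only [Nat.add_sub_cancel]
  exact entropy_eq _ _ _ _ hf _ hx hS rfl

private lemma key_ineq (K a b T C : ℝ) (hK : 2 ≤ K) (hb : 0 ≤ b) (hba : b ≤ a)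
    (ha : 0 < a) (hT : 0 < T) (hC : T * Real.log a ≤ C) :
    Real.log ((K - 1) * b + (T + a)) -
        ((K - 1) * (b * Real.log b) + (C + a * Real.log a)) / ((K - 1) * b + (T + a)) ≤
      Real.log (K * a + T) - (K * (a * Real.log a) + C) / (K * a + T) := by
  set S := K * a + T with hS
  set S' := (K - 1) * b + (T + a) with hS'
  have hKa : 0 ≤ K * a := mul_nonneg (by linarith) ha.le
  have hK1b : 0 ≤ (K - 1) * b := mul_nonneg (by linarith) hb
  have hSpos : 0 < S := by rw [hS]; linarith
  have hS'pos : 0 < S' := by rw [hS']; linarith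
  have hS'S : S' ≤ S := by
    have := mul_le_mul_of_nonneg_left hba (show (0:ℝ) ≤ K - 1 by linarith)
    rw [hS, hS']; linarith
  have hlSS' : Real.log S' ≤ Real.log S := Real.log_le_log hS'pos hS'S
  -- Step A (Gibbs step)
  have stepA : (K - 1) * (b * Real.log a) - (K - 1) * (b * Real.log b)
      ≤ S' * (Real.log S - Real.log S') := by
    rcases hb.eq_or_lt with hb0 | hbpos
    · rw [← hb0]
      have : (0:ℝ) ≤ S' * (Real.log S - Real.log S') :=
        mul_nonneg hS'pos.le (by linarith)
      simpa using this
    · have l1 : Real.log (a * S' / (b * S)) ≤ a * S' / (b * S) - 1 :=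
        Real.log_le_sub_one_of_pos (by positivity)
      have e1 : Real.log (a * S' / (b * S))
          = Real.log a - Real.log b + (Real.log S' - Real.log S) := by
        rw [Real.log_div (by positivity) (by positivity),
          Real.log_mul ha.ne' hS'pos.ne', Real.log_mul hbpos.ne' hSpos.ne']
        ring
      have l2 : Real.log (S' / S) ≤ S' / S - 1 :=
        Real.log_le_sub_one_of_pos (by positivity)
      have e2 : Real.log (S' / S) = Real.log S' - Real.log S :=
        Real.log_div hS'pos.ne' hSpos.ne'
      rw [e1] at l1
      rw [e2] at l2
      have l1' : b * S * (Real.log a - Real.log b + (Real.log S' - Real.log S))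
          ≤ a * S' - b * S := by
        have h := mul_le_mul_of_nonneg_left l1 (show (0:ℝ) ≤ b * S by positivity)
        have he : b * S * (a * S' / (b * S) - 1) = a * S' - b * S := by
          field_simp
        exact h.trans_eq he
      have l2' : S * (Real.log S' - Real.log S) ≤ S' - S := by
        have h := mul_le_mul_of_nonneg_left l2 hSpos.le
        have he : S * (S' / S - 1) = S' - S := by
          field_simp
        exact h.trans_eq he
      have c1 := mul_le_mul_of_nonneg_left l1' (show (0:ℝ) ≤ K - 1 by linarith)
      have c2 := mul_le_mul_of_nonneg_left l2' (show (0:ℝ) ≤ T + a by linarith)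
      have hgoal : S * ((K - 1) * (b * Real.log a) - (K - 1) * (b * Real.log b))
          ≤ S * (S' * (Real.log S - Real.log S')) := by
        rw [hS, hS'] at c1 c2 ⊢
        nlinarith [c1, c2]
      exact le_of_mul_le_mul_left hgoal hSpos
  -- Step B
  have stepB : (K * (a * Real.log a) + C) / S
      ≤ ((K - 1) * (b * Real.log a) + (C + a * Real.log a)) / S' := by
    rw [div_le_div_iff₀ hSpos hS'pos]
    have h := mul_nonneg (sub_nonneg.2 hS'S) (sub_nonneg.2 hC)
    rw [hS, hS'] at h ⊢
    nlinarith [h]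
  -- chain
  have chain1 : Real.log S' - ((K - 1) * (b * Real.log b) + (C + a * Real.log a)) / S'
      ≤ Real.log S - ((K - 1) * (b * Real.log a) + (C + a * Real.log a)) / S' := by
    have h : ((K - 1) * (b * Real.log a) + (C + a * Real.log a)) / S'
        - ((K - 1) * (b * Real.log b) + (C + a * Real.log a)) / S'
        ≤ Real.log S - Real.log S' := by
      rw [div_sub_div_same, div_le_iff₀ hS'pos]
      nlinarith [stepA]
    linarith
  linarith [chain1, stepB]

/-- For `n ≥ 3`, `2 ≤ m ≤ n − 1`, and `λ_1 ≥ λ_2 ≥ ⋯ ≥ λ_{m+1} ≥ 0` with `λ_1 > 0`, we have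
`φ_m(λ_1, …, λ_m) ≥ φ_{m+1}(λ_1, …, λ_m, λ_{m+1})`. -/
theorem phi_antitone_step {n m : ℕ} (hn : 3 ≤ n) (hm : 2 ≤ m) (hmn : m ≤ n - 1)
    (lam : ℕ → ℝ)
    (hmono : ∀ i j, 1 ≤ i → i ≤ j → j ≤ m + 1 → lam j ≤ lam i)
    (hnonneg : ∀ i, 1 ≤ i → i ≤ m + 1 → 0 ≤ lam i)
    (hpos : 0 < lam 1) :
    phi n (m + 1) lam ≤ phi n m lam := by
  obtain ⟨p, rfl⟩ : ∃ p, m = p + 2 := ⟨m - 2, by omega⟩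
  have hnp : ((p : ℝ) + 3) ≤ (n : ℝ) := by exact_mod_cast show p + 3 ≤ n by omega
  have hfnn : ∀ i ∈ Finset.Icc 1 (p + 1), 0 ≤ lam i := by
    intro i hi
    rw [Finset.mem_Icc] at hi
    exact hnonneg i hi.1 (by omega)
  have hfnn2 : ∀ i ∈ Finset.Icc 1 (p + 2), 0 ≤ lam i := by
    intro i hi
    rw [Finset.mem_Icc] at hi
    exact hnonneg i hi.1 (by omega)
  have ha0 : 0 ≤ lam (p + 2) := hnonneg _ (by omega) (by omega)
  have hb0 : 0 ≤ lam (p + 3) := hnonneg _ (by omega) (by omega)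
  have hba : lam (p + 3) ≤ lam (p + 2) := hmono (p + 2) (p + 3) (by omega) (by omega) (by omega)
  have hTpos : 0 < ∑ i ∈ Finset.Icc 1 (p + 1), lam i :=
    lt_of_lt_of_le hpos (Finset.single_le_sum hfnn (by simp))
  have hc1 : ((n : ℝ) - (p + 1 + 1 : ℕ) + 1) = (n : ℝ) - (p + 2) + 1 := by push_cast; ring
  have hc2 : ((n : ℝ) - (p + 2 + 1 : ℕ) + 1) = ((n : ℝ) - (p + 2) + 1) - 1 := by push_cast; ring
  have hS1 : 0 < ((n : ℝ) - (p + 1 + 1 : ℕ) + 1) * lam (p + 1 + 1)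
      + ∑ i ∈ Finset.Icc 1 (p + 1), lam i := by
    have h0 : 0 ≤ ((n : ℝ) - (p + 1 + 1 : ℕ) + 1) * lam (p + 1 + 1) := by
      rw [hc1]
      exact mul_nonneg (by linarith) (by exact_mod_cast ha0)
    linarith
  have esum : ∑ i ∈ Finset.Icc 1 (p + 2), lam i
      = (∑ i ∈ Finset.Icc 1 (p + 1), lam i) + lam (p + 2) :=
    Finset.sum_Icc_succ_top (by omega) _
  have esumlog : ∑ i ∈ Finset.Icc 1 (p + 2), lam i * Real.log (lam i)
      = (∑ i ∈ Finset.Icc 1 (p + 1), lam i * Real.log (lam i))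
        + lam (p + 2) * Real.log (lam (p + 2)) :=
    Finset.sum_Icc_succ_top (by omega) _
  have hS2 : 0 < ((n : ℝ) - (p + 2 + 1 : ℕ) + 1) * lam (p + 2 + 1)
      + ∑ i ∈ Finset.Icc 1 (p + 2), lam i := by
    have h0 : 0 ≤ ((n : ℝ) - (p + 2 + 1 : ℕ) + 1) * lam (p + 2 + 1) := by
      rw [hc2]
      exact mul_nonneg (by linarith) (by exact_mod_cast hb0)
    rw [esum]
    linarith
  have goal2 : phi n (p + 2 + 1) lam ≤ phi n (p + 1 + 1) lam := by
    rw [phi_eq n (p + 1) lam hfnn ha0 hS1, phi_eq n (p + 2) lam hfnn2 hb0 hS2,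
      esum, esumlog, hc1, hc2]
    set K : ℝ := (n : ℝ) - (p + 2) + 1 with hK
    have hK2 : 2 ≤ K := by rw [hK]; linarith
    set a : ℝ := lam (p + 2) with ha
    set b : ℝ := lam (p + 2 + 1) with hbd
    have hb' : b = lam (p + 3) := rfl
    set T : ℝ := ∑ i ∈ Finset.Icc 1 (p + 1), lam i with hTd
    set C : ℝ := ∑ i ∈ Finset.Icc 1 (p + 1), lam i * Real.log (lam i) with hCd
    rcases ha0.eq_or_lt with haz | hapos
    · -- a = 0 hence b = 0 : equality
      have haz' : a = 0 := haz.symm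
      have hbz' : b = 0 := le_antisymm (by rw [haz'] at hba; exact hba) hb0
      rw [haz', hbz']
      simp
    · -- main case
      have hC : T * Real.log a ≤ C := by
        rw [hTd, hCd, Finset.sum_mul]
        apply Finset.sum_le_sum
        intro i hi
        have hla : a ≤ lam i := by
          rw [Finset.mem_Icc] at hi
          exact hmono i (p + 2) hi.1 (by omega) (by omega)
        exact mul_le_mul_of_nonneg_left (Real.log_le_log hapos hla) (hfnn i hi)
      have := key_ineq K a b T C hK2 (by rw [hb']; exact hb0) (by rw [hb']; exact hba)
        hapos hTpos hC
      convert this using 2 <;> ring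
  exact goal2
end

section
/- Let n ≥ 2 and let λ_1 ≥ λ_2 ≥ ⋯ ≥ λ_n ≥ 0 be reals with λ_1 > 0. Then the spectral entropy at t = 1 is bounded by the two-eigenvalue functional: −Σ_{i=1}^n (λ_i / Σ_{j=1}^n λ_j) · log(λ_i / Σ_{j=1}^n λ_j) ≤ φ_2(λ_1, λ_2), with the convention 0 · log 0 = 0. -/
open Real Finset

/-- Pointwise Gibbs-type inequality: `-(p log p) ≤ -(p log q) + (q - p)`. -/
lemma gibbs_pointwise (p q : ℝ) (hp : 0 ≤ p) (hq : 0 < q) :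
    -(p * Real.log p) ≤ -(p * Real.log q) + (q - p) := by
  rcases hp.eq_or_lt with h | h
  · simp [← h]
    linarith [hq.le]
  · have h1 : Real.log (q / p) ≤ q / p - 1 := Real.log_le_sub_one_of_pos (div_pos hq h)
    rw [Real.log_div hq.ne' h.ne'] at h1
    have h2 : p * (Real.log q - Real.log p) ≤ p * (q / p - 1) :=
      mul_le_mul_of_nonneg_left h1 h.le
    have h3 : p * (q / p - 1) = q - p := by field_simp
    rw [h3, mul_sub] at h2
    linarith

/-- For `n ≥ 2` and `λ_1 ≥ λ_2 ≥ ⋯ ≥ λ_n ≥ 0` with `λ_1 > 0`, the spectral entropy at `t = 1`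
is bounded above by the two-eigenvalue functional:
`−∑_i (λ_i/∑_j λ_j)·log(λ_i/∑_j λ_j) ≤ φ_2(λ_1, λ_2)`. -/
theorem spectral_entropy_le_phi_two {n : ℕ} (hn : 2 ≤ n) (lam : ℕ → ℝ)
    (hmono : ∀ i j, 1 ≤ i → i ≤ j → j ≤ n → lam j ≤ lam i)
    (hnonneg : ∀ i, 1 ≤ i → i ≤ n → 0 ≤ lam i)
    (hpos : 0 < lam 1) :
    -∑ i ∈ Finset.Icc 1 n,
        (lam i / ∑ j ∈ Finset.Icc 1 n, lam j) *
          Real.log (lam i / ∑ j ∈ Finset.Icc 1 n, lam j) ≤ phi n 2 lam := by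
  have h1n : (1:ℕ) ≤ n := le_trans one_le_two hn
  have h21 : lam 2 ≤ lam 1 := hmono 1 2 le_rfl one_le_two hn
  have h2nn : 0 ≤ lam 2 := hnonneg 2 one_le_two hn
  set T : ℝ := ∑ j ∈ Finset.Icc 1 n, lam j with hTdef
  set S : ℝ := ((n : ℝ) - 1) * lam 2 + lam 1 with hSdef
  have hsplit : Finset.Icc 1 n = insert 1 (Finset.Icc 2 n) := by
    ext i; simp only [Finset.mem_Icc, Finset.mem_insert]; omega
  have h1not : (1:ℕ) ∉ Finset.Icc 2 n := by simp
  have hcardR : ((Finset.Icc 2 n).card : ℝ) = (n : ℝ) - 1 := by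
    rw [Nat.card_Icc]
    have : n + 1 - 2 = n - 1 := by omega
    rw [this, Nat.cast_sub h1n]; norm_num
  have hmem1 : (1:ℕ) ∈ Finset.Icc 1 n := by simp [h1n]
  have hTpos : 0 < T := by
    have := Finset.single_le_sum (f := lam)
      (fun i hi => hnonneg i (Finset.mem_Icc.mp hi).1 (Finset.mem_Icc.mp hi).2) hmem1
    linarith
  have hTsplit : T = lam 1 + ∑ i ∈ Finset.Icc 2 n, lam i := by
    rw [hTdef, hsplit, Finset.sum_insert h1not]
  have hTS : T ≤ S := by
    have htail : ∑ i ∈ Finset.Icc 2 n, lam i ≤ ((n : ℝ) - 1) * lam 2 := by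
      calc ∑ i ∈ Finset.Icc 2 n, lam i ≤ ∑ _i ∈ Finset.Icc 2 n, lam 2 :=
            Finset.sum_le_sum (fun i hi =>
              hmono 2 i one_le_two (Finset.mem_Icc.mp hi).1 (Finset.mem_Icc.mp hi).2)
        _ = ((Finset.Icc 2 n).card : ℝ) * lam 2 := by
            rw [Finset.sum_const, nsmul_eq_mul]
        _ = ((n : ℝ) - 1) * lam 2 := by rw [hcardR]
    rw [hTsplit, hSdef]; linarith
  have hphi : phi n 2 lam =
      -(((n : ℝ) - 1) * ((lam 2 / S) * Real.log (lam 2 / S)))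
        - (lam 1 / S) * Real.log (lam 1 / S) := by
    unfold phi
    norm_num [Finset.Icc_self, hSdef]
    ring_nf
  rw [hphi]
  rcases h2nn.eq_or_lt with h2z | h2pos
  · -- λ₂ = 0, hence all tail eigenvalues vanish
    have htail0 : ∀ i, 2 ≤ i → i ≤ n → lam i = 0 := fun i h2i hin =>
      le_antisymm (by rw [h2z] at *; exact le_trans (hmono 2 i one_le_two h2i hin) h2z.ge)
        (hnonneg i (le_trans one_le_two h2i) hin)
    have hT1 : T = lam 1 := by
      rw [hTsplit, Finset.sum_eq_zero (fun i hi =>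
        htail0 i (Finset.mem_Icc.mp hi).1 (Finset.mem_Icc.mp hi).2)]
      ring
    have hS1 : S = lam 1 := by rw [hSdef, ← h2z]; ring
    have hent : ∑ i ∈ Finset.Icc 1 n, (lam i / T) * Real.log (lam i / T) = 0 := by
      apply Finset.sum_eq_zero
      intro i hi
      rcases Finset.mem_Icc.mp hi with ⟨hi1, hin⟩
      rcases eq_or_lt_of_le hi1 with h | h
      · rw [← h, hT1, div_self hpos.ne', Real.log_one, mul_zero]
      · rw [htail0 i h hin]; simp
    rw [hent, hS1, ← h2z, div_self hpos.ne']
    simp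
  · -- λ₂ > 0: main case
    have hSpos : 0 < S := by
      rw [hSdef]
      have : (0:ℝ) ≤ ((n : ℝ) - 1) * lam 2 := by
        apply mul_nonneg _ h2nn
        have : (2:ℝ) ≤ (n:ℝ) := by exact_mod_cast hn
        linarith
      linarith
    set q : ℕ → ℝ := fun i => if i = 1 then lam 1 / S else lam 2 / S with hqdef
    have hqpos : ∀ i, 0 < q i := by
      intro i
      by_cases h : i = 1 <;> simp [hqdef, h, div_pos hpos hSpos, div_pos h2pos hSpos]
    have hp1 : ∑ i ∈ Finset.Icc 1 n, lam i / T = 1 := by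
      rw [← Finset.sum_div]; exact div_self hTpos.ne'
    have hq1 : ∑ i ∈ Finset.Icc 1 n, q i = 1 := by
      rw [hsplit, Finset.sum_insert h1not]
      have heq : ∑ i ∈ Finset.Icc 2 n, q i = ∑ _i ∈ Finset.Icc 2 n, lam 2 / S :=
        Finset.sum_congr rfl (fun i hi => by
          have : i ≠ 1 := by rcases Finset.mem_Icc.mp hi with ⟨h2, _⟩; omega
          simp [hqdef, this])
      rw [heq, Finset.sum_const, nsmul_eq_mul, hcardR]
      simp only [hqdef, if_pos rfl]
      field_simp
      ring
    -- Step 1: Gibbs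
    have step1 : ∑ i ∈ Finset.Icc 1 n, (lam i / T) * Real.log (q i)
        ≤ ∑ i ∈ Finset.Icc 1 n, (lam i / T) * Real.log (lam i / T) := by
      have key : ∀ i ∈ Finset.Icc 1 n,
          (lam i / T) * Real.log (q i) - (q i - lam i / T)
            ≤ (lam i / T) * Real.log (lam i / T) := by
        intro i hi
        rcases Finset.mem_Icc.mp hi with ⟨hi1, hin⟩
        have := gibbs_pointwise (lam i / T) (q i)
          (div_nonneg (hnonneg i hi1 hin) hTpos.le) (hqpos i)
        linarith
      have hsum := Finset.sum_le_sum key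
      rw [Finset.sum_sub_distrib, Finset.sum_sub_distrib, hq1, hp1] at hsum
      linarith
    -- Step 2: structure comparison
    have hRsum : ∑ i ∈ Finset.Icc 1 n, (lam i / T) * Real.log (q i)
        = (lam 1 / T) * Real.log (lam 1 / S)
          + ((∑ i ∈ Finset.Icc 2 n, lam i) / T) * Real.log (lam 2 / S) := by
      rw [hsplit, Finset.sum_insert h1not]
      have : ∑ i ∈ Finset.Icc 2 n, (lam i / T) * Real.log (q i)
          = ∑ i ∈ Finset.Icc 2 n, (lam i / T) * Real.log (lam 2 / S) := by
        apply Finset.sum_congr rfl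
        intro i hi
        have : i ≠ 1 := by rcases Finset.mem_Icc.mp hi with ⟨h2, _⟩; omega
        simp [hqdef, this]
      rw [this, ← Finset.sum_mul, ← Finset.sum_div]
      simp only [hqdef, if_pos rfl]
    have step2 : (lam 1 / S) * Real.log (lam 1 / S)
          + (((n:ℝ) - 1) * (lam 2 / S)) * Real.log (lam 2 / S)
        ≤ ∑ i ∈ Finset.Icc 1 n, (lam i / T) * Real.log (q i) := by
      rw [hRsum]
      set R : ℝ := ∑ i ∈ Finset.Icc 2 n, lam i with hRdef
      have e1 : ((n:ℝ) - 1) * (lam 2 / S) = 1 - lam 1 / S := by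
        field_simp [hSdef]
        linarith [hSdef]
      have e2 : R / T = 1 - lam 1 / T := by
        field_simp; linarith [hTsplit]
      have hab : lam 1 / S ≤ lam 1 / T := div_le_div_of_nonneg_left hpos.le hTpos hTS
      have hL : Real.log (lam 2 / S) ≤ Real.log (lam 1 / S) :=
        Real.log_le_log (div_pos h2pos hSpos) (div_le_div_of_nonneg_right h21 hSpos.le)
      rw [e1, e2]
      nlinarith [mul_nonneg (sub_nonneg.mpr hab)
        (sub_nonneg.mpr hL)]
    linarith
end

section
/- Let n ≥ 2. The function λ ↦ φ_2(1, λ) = −(n − 1)·(λ/(1 + (n−1)λ))·log(λ/(1 + (n−1)λ)) − (1/(1 + (n−1)λ))·log(1/(1 + (n−1)λ)) is concave on the interval (0, 1]. -/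
open Real

private lemma aux_concave (c : ℝ) (hc : 1 ≤ c) :
    ConcaveOn ℝ (Set.Ioc (0 : ℝ) 1) (fun x : ℝ =>
      Real.log (1 + c * x) - c * x / (1 + c * x) * Real.log x) := by
  have hint : interior (Set.Ioc (0:ℝ) 1) = Set.Ioo (0:ℝ) 1 := interior_Ioc
  have hSpos : ∀ x : ℝ, 0 < x → 0 < 1 + c * x := fun x hx => by nlinarith
  refine concaveOn_of_hasDerivWithinAt2_nonpos (f' := fun x =>
      -c * Real.log x / (1 + c * x) ^ 2)
    (f'' := fun x => (-c / x * (1 + c * x) ^ 2 + c * Real.log x * (2 * c * (1 + c * x))) /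
      ((1 + c * x) ^ 2) ^ 2)
    (convex_Ioc 0 1) ?_ ?_ ?_ ?_
  · -- continuity
    apply ContinuousOn.sub
    · apply ContinuousOn.log (by fun_prop)
      intro x hx; exact (hSpos x hx.1).ne'
    · apply ContinuousOn.mul
      · apply ContinuousOn.div (by fun_prop) (by fun_prop)
        intro x hx; exact (hSpos x hx.1).ne'
      · apply ContinuousOn.log (by fun_prop)
        intro x hx; exact hx.1.ne'
  · rw [hint]
    intro x hx
    have hx0 : (0:ℝ) < x := hx.1
    have hS : 0 < 1 + c * x := hSpos x hx0
    have h1 : HasDerivAt (fun y : ℝ => Real.log (1 + c * y)) (c / (1 + c * x)) x := by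
      have := (((hasDerivAt_id x).const_mul c).const_add 1).log hS.ne'
      simpa using this
    have h2 : HasDerivAt (fun y : ℝ => c * y / (1 + c * y))
        ((c * (1 + c * x) - c * x * c) / (1 + c * x) ^ 2) x := by
      have := ((hasDerivAt_id x).const_mul c).div
        (((hasDerivAt_id x).const_mul c).const_add 1) hS.ne'
      simpa [Pi.div_def] using this
    have h3 : HasDerivAt (fun y : ℝ => c * y / (1 + c * y) * Real.log y)
        ((c * (1 + c * x) - c * x * c) / (1 + c * x) ^ 2 * Real.log x
          + c * x / (1 + c * x) * x⁻¹) x := h2.mul (Real.hasDerivAt_log hx0.ne')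
    have h := h1.sub h3
    have heq : c / (1 + c * x) - ((c * (1 + c * x) - c * x * c) / (1 + c * x) ^ 2 * Real.log x
          + c * x / (1 + c * x) * x⁻¹) = -c * Real.log x / (1 + c * x) ^ 2 := by
      field_simp
      ring
    rw [heq] at h
    exact h.hasDerivWithinAt
  · rw [hint]
    intro x hx
    have hx0 : (0:ℝ) < x := hx.1
    have hS : 0 < 1 + c * x := hSpos x hx0
    have hnum : HasDerivAt (fun y : ℝ => -c * Real.log y) (-c / x) x := by
      have := (Real.hasDerivAt_log hx0.ne').const_mul (-c)
      simpa [div_eq_mul_inv, mul_comm] using this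
    have hden : HasDerivAt (fun y : ℝ => (1 + c * y) ^ 2) (2 * c * (1 + c * x)) x := by
      have := (((hasDerivAt_id x).const_mul c).const_add 1).pow 2
      simpa [Pi.pow_def, mul_comm, mul_assoc, mul_left_comm] using this
    have h := hnum.div hden (by positivity)
    have heq : (-c / x * (1 + c * x) ^ 2 - -c * Real.log x * (2 * c * (1 + c * x))) /
        ((1 + c * x) ^ 2) ^ 2 =
        (-c / x * (1 + c * x) ^ 2 + c * Real.log x * (2 * c * (1 + c * x))) /
        ((1 + c * x) ^ 2) ^ 2 := by ring
    rw [heq] at h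
    exact h.hasDerivWithinAt
  · rw [hint]
    intro x hx
    have hx0 : (0:ℝ) < x := hx.1
    have hS : 0 < 1 + c * x := hSpos x hx0
    have hlog : Real.log x ≤ 0 := Real.log_nonpos hx0.le hx.2.le
    apply div_nonpos_of_nonpos_of_nonneg
    · have h1 : -c / x * (1 + c * x) ^ 2 ≤ 0 := by
        apply mul_nonpos_of_nonpos_of_nonneg
        · apply div_nonpos_of_nonpos_of_nonneg <;> nlinarith
        · positivity
      have h2 : c * Real.log x * (2 * c * (1 + c * x)) ≤ 0 := by
        apply mul_nonpos_of_nonpos_of_nonneg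
        · nlinarith
        · positivity
      linarith
    · positivity

/-- For `n ≥ 2`, the function
`λ ↦ φ_2(1, λ) = −(n−1)·(λ/(1+(n−1)λ))·log(λ/(1+(n−1)λ)) − (1/(1+(n−1)λ))·log(1/(1+(n−1)λ))`
is concave on `(0, 1]`. -/
theorem phi_two_concaveOn {n : ℕ} (hn : 2 ≤ n) :
    ConcaveOn ℝ (Set.Ioc (0 : ℝ) 1) (fun lam : ℝ =>
      -((n : ℝ) - 1) * (lam / (1 + ((n : ℝ) - 1) * lam)) *
          Real.log (lam / (1 + ((n : ℝ) - 1) * lam)) -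
        (1 / (1 + ((n : ℝ) - 1) * lam)) * Real.log (1 / (1 + ((n : ℝ) - 1) * lam))) := by
  set c : ℝ := (n : ℝ) - 1 with hc
  have hc1 : 1 ≤ c := by
    have : (2:ℝ) ≤ (n:ℝ) := by exact_mod_cast hn
    simp [hc]; linarith
  refine (aux_concave c hc1).congr ?_
  intro x hx
  have hx0 : (0:ℝ) < x := hx.1
  have hS : 0 < 1 + c * x := by nlinarith
  simp only
  rw [Real.log_div hx0.ne' hS.ne', Real.log_div one_ne_zero hS.ne', Real.log_one]
  field_simp
  ring
end

section
/- Let n ≥ 2, let 1 ≤ m ≤ n − 1, and fix reals λ_1 ≥ λ_2 ≥ ⋯ ≥ λ_m > 0. For λ ∈ (0, λ_m], the function λ ↦ φ_{m+1}(λ_1, …, λ_m, λ) is differentiable with derivative ((n − m)/S(λ)²) · Σ_{i=1}^m λ_i · log(λ_i/λ), where S(λ) = (n − m)·λ + Σ_{i=1}^m λ_i; in particular, this derivative is nonnegative on (0, λ_m]. -/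
open Real Finset

/-- Fix `λ_1 ≥ ⋯ ≥ λ_m > 0`. On `(0, λ_m]`, the map `λ ↦ φ_{m+1}(λ_1, …, λ_m, λ)` (with
normalizer `S(λ) = (n − m)·λ + ∑_{i=1}^m λ_i`) is differentiable with derivative
`((n − m)/S(λ)²) · ∑_{i=1}^m λ_i·log(λ_i/λ)`, which is nonnegative on `(0, λ_m]`. -/
theorem phi_succ_hasDerivAt_and_nonneg {n m : ℕ} (hn : 2 ≤ n) (hm1 : 1 ≤ m)
    (hm2 : m ≤ n - 1) (lam : ℕ → ℝ)
    (hmono : ∀ i j, 1 ≤ i → i ≤ j → j ≤ m → lam j ≤ lam i)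
    (hpos : ∀ i, 1 ≤ i → i ≤ m → 0 < lam i) :
    ∀ l ∈ Set.Ioc (0 : ℝ) (lam m),
      HasDerivAt
        (fun l' : ℝ =>
          -((n : ℝ) - m) *
              (l' / (((n : ℝ) - m) * l' + ∑ j ∈ Finset.Icc 1 m, lam j)) *
              Real.log (l' / (((n : ℝ) - m) * l' + ∑ j ∈ Finset.Icc 1 m, lam j)) -
            ∑ i ∈ Finset.Icc 1 m,
              (lam i / (((n : ℝ) - m) * l' + ∑ j ∈ Finset.Icc 1 m, lam j)) *
                Real.log (lam i / (((n : ℝ) - m) * l' + ∑ j ∈ Finset.Icc 1 m, lam j)))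
        ((((n : ℝ) - m) / (((n : ℝ) - m) * l + ∑ j ∈ Finset.Icc 1 m, lam j) ^ 2) *
          ∑ i ∈ Finset.Icc 1 m, lam i * Real.log (lam i / l)) l ∧
      0 ≤ (((n : ℝ) - m) / (((n : ℝ) - m) * l + ∑ j ∈ Finset.Icc 1 m, lam j) ^ 2) *
          ∑ i ∈ Finset.Icc 1 m, lam i * Real.log (lam i / l) := by
  intro l hl
  obtain ⟨hl0, hlm⟩ := hl
  set c : ℝ := (n : ℝ) - m with hc_def
  set T : ℝ := ∑ j ∈ Finset.Icc 1 m, lam j with hT_def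
  have hmn : m < n := by omega
  have hc1 : (1 : ℝ) ≤ c := by
    have : (m : ℝ) + 1 ≤ n := by exact_mod_cast hmn
    rw [hc_def]; linarith
  have hc0 : (0 : ℝ) < c := lt_of_lt_of_le one_pos hc1
  have hT : 0 < T := by
    refine Finset.sum_pos (fun i hi => hpos i (Finset.mem_Icc.mp hi).1 (Finset.mem_Icc.mp hi).2)
      ⟨1, Finset.mem_Icc.mpr ⟨le_refl 1, hm1⟩⟩
  set S : ℝ := c * l + T with hS_def
  have hS : 0 < S := by
    have := mul_pos hc0 hl0
    rw [hS_def]; linarith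
  -- derivative of the normalizer
  have hSd : HasDerivAt (fun l' : ℝ => c * l' + T) c l := by
    simpa using ((hasDerivAt_id l).const_mul c).add_const T
  -- derivative of l' / S(l')
  have hud : HasDerivAt (fun l' : ℝ => l' / (c * l' + T)) ((1 * S - l * c) / S ^ 2) l :=
    (hasDerivAt_id l).div hSd hS.ne'
  have hupos : 0 < l / S := div_pos hl0 hS
  -- the first term
  have hA : HasDerivAt (fun l' : ℝ => -c * (l' / (c * l' + T)) * Real.log (l' / (c * l' + T)))
      (-(c / S ^ 2) * (T * Real.log l) + (c / S ^ 2) * (Real.log S - 1) * T) l := by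
    have h := (hud.const_mul (-c)).fun_mul (hud.log hupos.ne')
    refine h.congr_deriv (Eq.symm ?_)
    rw [Real.log_div hl0.ne' hS.ne']
    have hl' : l ≠ 0 := hl0.ne'
    have hS' : S ≠ 0 := hS.ne'
    field_simp
    rw [hS_def]
    ring
  -- per-term derivatives of the sum
  have hB : ∀ i ∈ Finset.Icc 1 m,
      HasDerivAt (fun l' : ℝ => lam i / (c * l' + T) * Real.log (lam i / (c * l' + T)))
        (-(c / S ^ 2) * (lam i * Real.log (lam i)) + (c / S ^ 2) * (Real.log S - 1) * lam i) l := by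
    intro i hi
    obtain ⟨hi1, hi2⟩ := Finset.mem_Icc.mp hi
    have hpi : 0 < lam i := hpos i hi1 hi2
    have hvd : HasDerivAt (fun l' : ℝ => lam i / (c * l' + T)) ((0 * S - lam i * c) / S ^ 2) l :=
      (hasDerivAt_const l (lam i)).div hSd hS.ne'
    have hvpos : 0 < lam i / S := div_pos hpi hS
    have h := hvd.fun_mul (hvd.log hvpos.ne')
    refine h.congr_deriv (Eq.symm ?_)
    rw [Real.log_div hpi.ne' hS.ne']
    have hpi' : lam i ≠ 0 := hpi.ne'
    have hS' : S ≠ 0 := hS.ne'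
    field_simp
    ring
  have hBsum : HasDerivAt (fun l' : ℝ => ∑ i ∈ Finset.Icc 1 m,
      lam i / (c * l' + T) * Real.log (lam i / (c * l' + T)))
      (∑ i ∈ Finset.Icc 1 m,
        (-(c / S ^ 2) * (lam i * Real.log (lam i)) + (c / S ^ 2) * (Real.log S - 1) * lam i)) l :=
    HasDerivAt.fun_sum hB
  have hmain := hA.fun_sub hBsum
  constructor
  · refine hmain.congr_deriv (Eq.symm ?_)
    have hsum1 : ∑ i ∈ Finset.Icc 1 m, lam i * Real.log (lam i / l)
        = (∑ i ∈ Finset.Icc 1 m, lam i * Real.log (lam i)) - T * Real.log l := by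
      rw [Finset.sum_congr rfl (fun i hi => by
        rw [Real.log_div (hpos i (Finset.mem_Icc.mp hi).1 (Finset.mem_Icc.mp hi).2).ne' hl0.ne',
          mul_sub])]
      rw [Finset.sum_sub_distrib, ← Finset.sum_mul]
    have hsum2 : ∑ i ∈ Finset.Icc 1 m,
        (-(c / S ^ 2) * (lam i * Real.log (lam i)) + (c / S ^ 2) * (Real.log S - 1) * lam i)
        = -(c / S ^ 2) * (∑ i ∈ Finset.Icc 1 m, lam i * Real.log (lam i))
          + (c / S ^ 2) * (Real.log S - 1) * T := by
      rw [Finset.sum_add_distrib, ← Finset.mul_sum, ← Finset.mul_sum]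
    rw [hsum1, hsum2]
    ring
  · apply mul_nonneg (div_nonneg hc0.le (sq_nonneg S))
    apply Finset.sum_nonneg
    intro i hi
    obtain ⟨hi1, hi2⟩ := Finset.mem_Icc.mp hi
    have hpi : 0 < lam i := hpos i hi1 hi2
    have hle : l ≤ lam i := le_trans hlm (hmono i m hi1 hi2 le_rfl)
    exact mul_nonneg hpi.le (Real.log_nonneg ((one_le_div hl0).mpr hle))
end
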